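/- (Matched pairwise error, degenerate case.) Let n ≥ 1, β ∈ [0,1), σ_c > 0. Let x_i, x_j ∈ ℝ^n with d = x_i − x_j ≠ 0 and δ = ‖d‖, and let t_i, t_j ∈ ℝ^n be unit vectors with ⟨d, t_i⟩ = 0, ⟨d, t_j⟩ = 0, and t_j = γ·t_i where γ ∈ {−1, +1}. For l ∈ {i, j} define the matched metric Λ_l(Y) = ‖Y − √(1−β)·x_l‖²/σ_c² − β·⟨Y − √(1−β)·x_l, t_l⟩²/(σ_c²(β+σ_c²)). Let ξ be a standard real Gaussian and N a random vector with i.i.d. centered Gaussian coordinates of variance σ_c², independent of ξ, and set Y = √(1−β)·x_i + √β·ξ·t_i + N. Then the probability of the event {Λ_j(Y) ≤ Λ_i(Y)} equals Q( √(1−β)·δ / (2σ_c) ). -/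

import Mathlib

open MeasureTheory ProbabilityTheory Real
open scoped NNReal ENNReal
set_option maxHeartbeats 1000000

/-- The standard Gaussian tail function `Q(x) = (1/√(2π)) ∫_x^∞ e^{−u²/2} du`. -/
noncomputable def gaussQ (x : ℝ) : ℝ :=
  (Real.sqrt (2 * Real.pi))⁻¹ * ∫ u in Set.Ioi x, Real.exp (-u ^ 2 / 2)

/-- The matched decoding metric
`Λ(Y) = ‖Y − √(1−β)x‖²/σc² − β⟨Y − √(1−β)x, t⟩²/(σc²(β+σc²))`. -/
noncomputable def matchedMetric {n : ℕ} (β σc : ℝ) (x t Y : EuclideanSpace ℝ (Fin n)) : ℝ :=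
  ‖Y - Real.sqrt (1 - β) • x‖ ^ 2 / σc ^ 2 -
    β * (inner ℝ (Y - Real.sqrt (1 - β) • x) t : ℝ) ^ 2 / (σc ^ 2 * (β + σc ^ 2))

lemma gaussianPDFReal_conv_aux (m₁ m₂ : ℝ) (v₁ v₂ : ℝ≥0) (h₁ : v₁ ≠ 0) (h₂ : v₂ ≠ 0)
    (z y : ℝ) :
    gaussianPDFReal m₁ v₁ (z - y) * gaussianPDFReal m₂ v₂ y =
      gaussianPDFReal (m₁ + m₂) (v₁ + v₂) z *
        gaussianPDFReal ((v₂ * (z - m₁) + v₁ * m₂) / (v₁ + v₂)) (v₁ * v₂ / (v₁ + v₂)) y := by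
  have hv1 : (0:ℝ) < v₁ := lt_of_le_of_ne v₁.2 (by exact_mod_cast Ne.symm h₁)
  have hv2 : (0:ℝ) < v₂ := lt_of_le_of_ne v₂.2 (by exact_mod_cast Ne.symm h₂)
  have hs : (0:ℝ) < (v₁:ℝ) + v₂ := by linarith
  have hw : ((v₁ * v₂ / (v₁ + v₂) : ℝ≥0) : ℝ) = (v₁:ℝ) * v₂ / ((v₁:ℝ) + v₂) := by
    push_cast; ring
  simp only [gaussianPDFReal, NNReal.coe_add, hw]
  rw [mul_mul_mul_comm, mul_mul_mul_comm ((√(2 * π * ((v₁:ℝ) + v₂)))⁻¹), ← Real.exp_add,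
    ← Real.exp_add]
  congr 1
  · rw [← mul_inv, ← mul_inv, ← Real.sqrt_mul (by positivity), ← Real.sqrt_mul (by positivity)]
    congr 2
    field_simp
  · congr 1
    field_simp
    ring

lemma gaussianReal_conv_lemma (m₁ m₂ : ℝ) (v₁ v₂ : ℝ≥0) :
    Measure.map (fun p : ℝ × ℝ => p.1 + p.2) ((gaussianReal m₁ v₁).prod (gaussianReal m₂ v₂)) =
      gaussianReal (m₁ + m₂) (v₁ + v₂) := by
  by_cases h₁ : v₁ = 0
  · subst h₁
    rw [gaussianReal_zero_var, Measure.dirac_prod,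
      Measure.map_map measurable_add measurable_prodMk_left, zero_add]
    have : ((fun p : ℝ × ℝ => p.1 + p.2) ∘ Prod.mk m₁) = (fun y : ℝ => m₁ + y) := by
      funext y; rfl
    rw [this, gaussianReal_map_const_add, add_comm]
  by_cases h₂ : v₂ = 0
  · subst h₂
    rw [gaussianReal_zero_var, Measure.prod_dirac,
      Measure.map_map measurable_add measurable_prodMk_right, add_zero]
    have : ((fun p : ℝ × ℝ => p.1 + p.2) ∘ (fun x : ℝ => (x, m₂))) = (fun y : ℝ => y + m₂) := by
      funext y; rfl
    rw [this, gaussianReal_map_add_const]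
  have hsum : v₁ + v₂ ≠ 0 := by simp [h₁]
  have hsum' : v₂ + v₁ ≠ 0 := by simp [h₁]
  have hw : v₂ * v₁ / (v₂ + v₁) ≠ 0 := by
    simp only [ne_eq, div_eq_zero_iff, mul_eq_zero, not_or]
    exact ⟨⟨h₂, h₁⟩, hsum'⟩
  ext s hs
  rw [Measure.map_apply measurable_add hs, Measure.prod_apply (measurable_add hs)]
  have hstep : ∀ x : ℝ, gaussianReal m₂ v₂ (Prod.mk x ⁻¹' ((fun p : ℝ × ℝ => p.1 + p.2) ⁻¹' s))
      = ∫⁻ z in s, ENNReal.ofReal (gaussianPDFReal m₂ v₂ (z - x)) := by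
    intro x
    have h : Prod.mk x ⁻¹' ((fun p : ℝ × ℝ => p.1 + p.2) ⁻¹' s) = (fun y => x + y) ⁻¹' s := rfl
    rw [h, ← Measure.map_apply (measurable_const_add x) hs, gaussianReal_map_const_add,
      gaussianReal_apply _ h₂]
    refine setLIntegral_congr_fun hs (fun z _ => ?_)
    rw [gaussianPDF, gaussianPDFReal_sub]
  simp_rw [hstep]
  have hmeasR : Measurable fun q : ℝ × ℝ =>
      ENNReal.ofReal (gaussianPDFReal m₂ v₂ (q.2 - q.1)) :=
    ((measurable_gaussianPDFReal m₂ v₂).comp (measurable_snd.sub measurable_fst)).ennreal_ofReal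
  have hmeasF : Measurable fun x : ℝ =>
      ∫⁻ z in s, ENNReal.ofReal (gaussianPDFReal m₂ v₂ (z - x)) :=
    Measurable.lintegral_prod_right hmeasR
  rw [gaussianReal_of_var_ne_zero _ h₁,
    lintegral_withDensity_eq_lintegral_mul _ (measurable_gaussianPDF _ _) hmeasF]
  simp only [Pi.mul_apply]
  have h1 : ∀ x : ℝ, gaussianPDF m₁ v₁ x *
        ∫⁻ z in s, ENNReal.ofReal (gaussianPDFReal m₂ v₂ (z - x))
      = ∫⁻ z in s, ENNReal.ofReal (gaussianPDFReal m₂ v₂ (z - x) * gaussianPDFReal m₁ v₁ x) := by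
    intro x
    have hm2 : Measurable fun z : ℝ => ENNReal.ofReal (gaussianPDFReal m₂ v₂ (z - x)) :=
      ((measurable_gaussianPDFReal m₂ v₂).comp (measurable_id.sub_const x)).ennreal_ofReal
    rw [mul_comm, ← lintegral_mul_const _ hm2]
    congr 1
    funext z
    rw [gaussianPDF, ← ENNReal.ofReal_mul (gaussianPDFReal_nonneg _ _ _)]
  simp_rw [h1]
  rw [lintegral_lintegral_swap
    ((((measurable_gaussianPDFReal m₂ v₂).comp (measurable_snd.sub measurable_fst)).mul
      ((measurable_gaussianPDFReal m₁ v₁).comp measurable_fst)).ennreal_ofReal.aemeasurable)]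
  have hinner : ∀ z : ℝ, (∫⁻ x, ENNReal.ofReal
        (gaussianPDFReal m₂ v₂ (z - x) * gaussianPDFReal m₁ v₁ x))
      = gaussianPDF (m₁ + m₂) (v₁ + v₂) z := by
    intro z
    have hptwise : ∀ x : ℝ, gaussianPDFReal m₂ v₂ (z - x) * gaussianPDFReal m₁ v₁ x
        = gaussianPDFReal (m₂ + m₁) (v₂ + v₁) z *
            gaussianPDFReal ((v₁ * (z - m₂) + v₂ * m₁) / (v₂ + v₁)) (v₂ * v₁ / (v₂ + v₁)) x :=
      fun x => gaussianPDFReal_conv_aux m₂ m₁ v₂ v₁ h₂ h₁ z x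
    simp_rw [hptwise, ENNReal.ofReal_mul (gaussianPDFReal_nonneg _ _ _),
      lintegral_const_mul' _ _ ENNReal.ofReal_ne_top,
      lintegral_gaussianPDFReal_eq_one _ hw, mul_one]
    rw [gaussianPDF, add_comm m₂ m₁, add_comm v₂ v₁]
  simp_rw [hinner]
  rw [gaussianReal_apply _ hsum]

lemma map_linear_pi_gaussian (v : ℝ≥0) :
    ∀ (k : ℕ) (d : Fin k → ℝ),
      Measure.map (fun x : Fin k → ℝ => ∑ i, d i * x i)
          (Measure.pi fun _ : Fin k => gaussianReal 0 v)
        = gaussianReal 0 (⟨∑ i, (d i) ^ 2, by positivity⟩ * v) := by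
  intro k
  induction k with
  | zero =>
    intro d
    have h0 : (fun x : Fin 0 → ℝ => ∑ i, d i * x i) = fun _ => (0 : ℝ) := by
      funext x; simp
    rw [h0, Measure.map_const, measure_univ, one_smul]
    rw [← gaussianReal_zero_var]
    congr 1; ext; show (0:ℝ) = (∑ i, d i ^ 2) * v; simp
  | succ k ih =>
    intro d
    set e := MeasurableEquiv.piFinSuccAbove (fun _ : Fin (k + 1) => ℝ) 0 with he
    have hmp := measurePreserving_piFinSuccAbove (fun _ : Fin (k + 1) => gaussianReal 0 v) 0
    set g : ℝ × (Fin k → ℝ) → ℝ :=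
      fun p => d 0 * p.1 + ∑ j, d j.succ * p.2 j with hg
    have hfe : (fun x : Fin (k + 1) → ℝ => ∑ i, d i * x i) = g ∘ e := by
      funext x
      simp only [hg, Function.comp_apply, he, MeasurableEquiv.piFinSuccAbove_apply]
      rw [Fin.sum_univ_succ]
      simp [Fin.removeNth, Fin.succAbove, Fin.tail]
    have hmg : Measurable g := by fun_prop
    rw [hfe, ← Measure.map_map hmg e.measurable, hmp.map_eq]
    have hgsplit : g = (fun p : ℝ × ℝ => p.1 + p.2) ∘
        (Prod.map (fun a : ℝ => d 0 * a) (fun y : Fin k → ℝ => ∑ j, d j.succ * y j)) := by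
      funext p; rfl
    rw [hgsplit, ← Measure.map_map measurable_add (by fun_prop),
      ← Measure.map_prod_map _ _ (by fun_prop) (by fun_prop),
      gaussianReal_map_const_mul, ih, gaussianReal_conv_lemma]
    norm_num
    congr 1
    ext
    push_cast
    show d 0 ^ 2 * (v:ℝ) + (∑ i : Fin k, d i.succ ^ 2) * v = (∑ i, d i ^ 2) * v
    rw [Fin.sum_univ_succ]
    ring

lemma gaussianReal_Iic_toReal (v : ℝ≥0) (hv : v ≠ 0) (c : ℝ) :
    (gaussianReal 0 v (Set.Iic c)).toReal = gaussQ (-c / Real.sqrt v) := by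
  have hv' : (0:ℝ) < v := lt_of_le_of_ne v.2 (by exact_mod_cast Ne.symm hv)
  have hsv : (0:ℝ) < Real.sqrt v := Real.sqrt_pos.mpr hv'
  rw [gaussianReal_apply_eq_integral 0 hv,
    ENNReal.toReal_ofReal (setIntegral_nonneg measurableSet_Iic
      fun x _ => gaussianPDFReal_nonneg _ _ _)]
  simp only [gaussianPDFReal, sub_zero]
  rw [integral_const_mul]
  have step1 : ∫ x in Set.Iic c, Real.exp (-x ^ 2 / (2 * v))
      = ∫ x in Set.Ioi (-c), Real.exp (-x ^ 2 / (2 * v)) := by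
    have h := integral_comp_neg_Iic c (fun x => Real.exp (-x ^ 2 / (2 * (v:ℝ))))
    simpa [neg_sq] using h
  have step2 : ∫ x in Set.Ioi (-c), Real.exp (-x ^ 2 / (2 * v))
      = Real.sqrt v * ∫ u in Set.Ioi (-c / Real.sqrt v), Real.exp (-u ^ 2 / 2) := by
    have h := integral_comp_mul_left_Ioi (fun x => Real.exp (-x ^ 2 / (2 * (v:ℝ))))
      (-c / Real.sqrt v) hsv
    rw [mul_div_cancel₀ _ hsv.ne'] at h
    have hinteg : ∀ u : ℝ, Real.exp (-(Real.sqrt v * u) ^ 2 / (2 * v)) = Real.exp (-u ^ 2 / 2) := by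
      intro u
      congr 1
      rw [mul_pow, Real.sq_sqrt hv'.le]
      field_simp
    simp only [hinteg] at h
    rw [smul_eq_mul] at h
    rw [h]
    field_simp
  rw [step1, step2, gaussQ, ← mul_assoc]
  congr 1
  rw [Real.sqrt_mul (by positivity) (v:ℝ)]
  field_simp

/-- matched pairwise error, degenerate case `γ ∈ {−1,+1}`: on a phantom
pair with `t_j = γ·t_i`, the matched pairwise error probability equals
`Q(√(1−β)δ/(2σc))`. -/
theorem matched_pairwise_error_degenerate (n : ℕ) (hn : 1 ≤ n) (β σc : ℝ)
    (hβ0 : 0 ≤ β) (hβ1 : β < 1) (hσ : 0 < σc)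
    (xi xj ti tj : EuclideanSpace ℝ (Fin n)) (hd : xi - xj ≠ 0)
    (hti : ‖ti‖ = 1) (htj : ‖tj‖ = 1)
    (horthi : (inner ℝ (xi - xj) ti : ℝ) = 0) (horthj : (inner ℝ (xi - xj) tj : ℝ) = 0)
    (γ : ℝ) (hγ : γ = 1 ∨ γ = -1) (htij : tj = γ • ti) :
    (((gaussianReal 0 1).prod
        ((Measure.pi fun _ : Fin n => gaussianReal 0 ⟨σc ^ 2, sq_nonneg σc⟩ :
          Measure (Fin n → ℝ)).map (WithLp.toLp 2) : Measure (EuclideanSpace ℝ (Fin n))))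
      {p : ℝ × EuclideanSpace ℝ (Fin n) |
        matchedMetric β σc xj tj
            (Real.sqrt (1 - β) • xi + (Real.sqrt β * p.1) • ti + p.2) ≤
          matchedMetric β σc xi ti
            (Real.sqrt (1 - β) • xi + (Real.sqrt β * p.1) • ti + p.2)}).toReal =
      gaussQ (Real.sqrt (1 - β) * ‖xi - xj‖ / (2 * σc)) := by
  classical
  set d : EuclideanSpace ℝ (Fin n) := xi - xj with hd_def
  have hδ : 0 < ‖d‖ := norm_pos_iff.mpr hd
  have h1β : (0:ℝ) < 1 - β := by linarith
  set s : ℝ := Real.sqrt (1 - β) with hs_def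
  have hs : 0 < s := Real.sqrt_pos.mpr h1β
  have hs2 : s ^ 2 = 1 - β := Real.sq_sqrt h1β.le
  have hσ2 : (0:ℝ) < σc ^ 2 := by positivity
  set cc : ℝ := -(s * ‖d‖ ^ 2 / 2) with hcc_def
  have hγ2 : γ ^ 2 = 1 := by rcases hγ with h | h <;> simp [h]
  -- pointwise reduction of the event
  have key : ∀ (ξ : ℝ) (N : EuclideanSpace ℝ (Fin n)),
      (matchedMetric β σc xj tj (s • xi + (Real.sqrt β * ξ) • ti + N) ≤
        matchedMetric β σc xi ti (s • xi + (Real.sqrt β * ξ) • ti + N)) ↔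
      (inner ℝ N d : ℝ) ≤ cc := by
    intro ξ N
    set Z : EuclideanSpace ℝ (Fin n) := (Real.sqrt β * ξ) • ti + N with hZ_def
    have hZi : s • xi + (Real.sqrt β * ξ) • ti + N - s • xi = Z := by
      rw [hZ_def]; abel
    have hZj : s • xi + (Real.sqrt β * ξ) • ti + N - s • xj = Z + s • d := by
      rw [hZ_def, hd_def, smul_sub]; abel
    have hdti : (inner ℝ d ti : ℝ) = 0 := horthi
    have hdtj : (inner ℝ d tj : ℝ) = 0 := horthj
    have hinnerj : (inner ℝ (Z + s • d) tj : ℝ) = γ * (inner ℝ Z ti : ℝ) := by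
      rw [inner_add_left, real_inner_smul_left, hdtj, mul_zero, add_zero, htij,
        real_inner_smul_right]
    have hdti' : (inner ℝ ti d : ℝ) = 0 := by rw [real_inner_comm]; exact hdti
    have hinnerZ : (inner ℝ Z d : ℝ) = (inner ℝ N d : ℝ) := by
      rw [hZ_def, inner_add_left, real_inner_smul_left, hdti', mul_zero, zero_add]
    rw [matchedMetric, matchedMetric, hZi, hZj, hinnerj, mul_pow, hγ2, one_mul,
      sub_le_sub_iff_right, div_le_div_iff_of_pos_right hσ2]
    have hexp : ‖Z + s • d‖ ^ 2 = ‖Z‖ ^ 2 + 2 * (inner ℝ Z (s • d) : ℝ) + ‖s • d‖ ^ 2 :=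
      norm_add_sq_real Z (s • d)
    rw [hexp, real_inner_smul_right, hinnerZ, norm_smul, mul_pow, Real.norm_eq_abs,
      abs_of_pos hs]
    constructor
    · intro h
      rw [hcc_def]
      nlinarith [hs, hs2, sq_nonneg (‖d‖), mul_pos hs hs]
    · intro h
      rw [hcc_def] at h
      nlinarith [hs, hs2, sq_nonneg (‖d‖), mul_le_mul_of_nonneg_left h hs.le]
  -- rewrite the event set as a product
  have hset : {p : ℝ × EuclideanSpace ℝ (Fin n) |
        matchedMetric β σc xj tj (s • xi + (Real.sqrt β * p.1) • ti + p.2) ≤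
          matchedMetric β σc xi ti (s • xi + (Real.sqrt β * p.1) • ti + p.2)} =
      Set.univ ×ˢ {N : EuclideanSpace ℝ (Fin n) | (inner ℝ N d : ℝ) ≤ cc} := by
    ext p
    simp only [Set.mem_setOf_eq, Set.mem_prod, Set.mem_univ, true_and]
    exact key p.1 p.2
  haveI : ∀ _ : Fin n, IsProbabilityMeasure (gaussianReal 0 ⟨σc ^ 2, sq_nonneg σc⟩) :=
    fun _ => instIsProbabilityMeasureGaussianReal _ _
  haveI : IsProbabilityMeasure ((Measure.pi fun _ : Fin n => gaussianReal 0 ⟨σc ^ 2, sq_nonneg σc⟩ :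
      Measure (Fin n → ℝ)).map (WithLp.toLp 2 : (Fin n → ℝ) → EuclideanSpace ℝ (Fin n))) :=
    Measure.isProbabilityMeasure_map (by fun_prop)
  rw [hset, Measure.prod_prod, measure_univ, one_mul]
  -- compute the Gaussian measure of the half-space
  have hinner_sum : ∀ N : EuclideanSpace ℝ (Fin n),
      (inner ℝ N d : ℝ) = ∑ i, d i * N i := by
    intro N
    rw [real_inner_comm]
    simp [PiLp.inner_apply, RCLike.inner_apply, mul_comm]
  have hTset : WithLp.toLp 2 ⁻¹' {N : EuclideanSpace ℝ (Fin n) | (inner ℝ N d : ℝ) ≤ cc} =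
      (fun x : Fin n → ℝ => ∑ i, d i * x i) ⁻¹' (Set.Iic cc) := by
    ext N
    simp only [Set.mem_setOf_eq, Set.mem_preimage, Set.mem_Iic]
    rw [hinner_sum]
  rw [Measure.map_apply (by fun_prop) (isClosed_le (by fun_prop) continuous_const).measurableSet]
  rw [hTset, ← Measure.map_apply (by fun_prop) measurableSet_Iic]
  erw [map_linear_pi_gaussian _ n (fun i => d i)]
  have hsum_sq : ∑ i, d i ^ 2 = ‖d‖ ^ 2 := by
    rw [EuclideanSpace.norm_eq, Real.sq_sqrt (by positivity)]
    simp [sq_abs]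
  have hvar_ne : (⟨∑ i, d i ^ 2, by positivity⟩ : NNReal) * ⟨σc ^ 2, sq_nonneg σc⟩ ≠ 0 := by
    intro h
    have h2 : (∑ i, d i ^ 2) * σc ^ 2 = 0 := by
      exact congrArg NNReal.toReal h
    rw [hsum_sq] at h2
    exact absurd h2 (by positivity)
  erw [gaussianReal_Iic_toReal _ hvar_ne cc]
  have hvar_coe : (((⟨∑ i, d i ^ 2, by positivity⟩ : ℝ≥0) * (⟨σc ^ 2, sq_nonneg σc⟩ : ℝ≥0) : ℝ≥0) : ℝ)
      = ‖d‖ ^ 2 * σc ^ 2 := by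
    show (∑ i, d i ^ 2) * σc ^ 2 = ‖d‖ ^ 2 * σc ^ 2
    rw [hsum_sq]
  have hfin : -cc / Real.sqrt
        (((⟨∑ i, d i ^ 2, by positivity⟩ : ℝ≥0) * (⟨σc ^ 2, sq_nonneg σc⟩ : ℝ≥0) : ℝ≥0) : ℝ)
      = s * ‖d‖ / (2 * σc) := by
    rw [hvar_coe, show ‖d‖ ^ 2 * σc ^ 2 = (‖d‖ * σc) ^ 2 by ring,
      Real.sqrt_sq (by positivity), hcc_def]
    field_simp
  exact congrArg gaussQ hfin
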